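/- Assume SO(n,k,β) is friendly. Let L be a field extension of k, let α ∈ k be nonzero, and let s ∈ L satisfy s² = ι(α), where 1 and s are linearly independent over k. Let A₀ ∈ M_n(k), set A = s·ι(A₀), and assume Aᵀ·M̄·A = M̄ and A² = I_n (so Inn_A is a Type 2 k-involution of SO(n,k,β)). Then n is even and there exists X ∈ GL(n,k) such that A = (−s·α⁻¹)·ι(X·N_α·X⁻¹), where N_α is the n×n block matrix [[0, I_{n/2}],[α·I_{n/2}, 0]] over k, and Xᵀ·M·X has block form [[X₁, X₂],[X₂, α⁻¹·X₁]] where X₁ and X₂ are diagonal (n/2)×(n/2) matrices over k. -/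

import Mathlib

open Matrix

set_option maxHeartbeats 1000000 in
theorem key_structure {k : Type*} [Field k]
    (hchar : (2 : k) ≠ 0) {n : ℕ}
    (M : Matrix (Fin n) (Fin n) k) (hMdiag : M.IsDiag)
    (α : k) (hα : α ≠ 0) (hns : ∀ c : k, c ^ 2 ≠ α)
    (C : Matrix (Fin n) (Fin n) k)
    (hC2 : C * C = α • 1) (hCM : Cᵀ * M = M * C) :
    ∃ (m : ℕ) (hm : n = m + m) (X : Matrix (Fin n) (Fin n) k), IsUnit X ∧
      C = X * (Matrix.reindex (finSumFinEquiv.trans (finCongr hm.symm))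
            (finSumFinEquiv.trans (finCongr hm.symm))
            (Matrix.fromBlocks 0 1 (α • (1 : Matrix (Fin m) (Fin m) k)) 0)) * X⁻¹ ∧
      ∃ X₁ X₂ : Matrix (Fin m) (Fin m) k, X₁.IsDiag ∧ X₂.IsDiag ∧
        Xᵀ * M * X = Matrix.reindex (finSumFinEquiv.trans (finCongr hm.symm))
          (finSumFinEquiv.trans (finCongr hm.symm))
          (Matrix.fromBlocks X₁ X₂ X₂ (α⁻¹ • X₁)) := by
  classical
  -- basic facts about M and C
  have hMsymm : Mᵀ = M := hMdiag.isSymm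
  have hCCv : ∀ v : Fin n → k, C *ᵥ (C *ᵥ v) = α • v := by
    intro v
    rw [Matrix.mulVec_mulVec, hC2, Matrix.smul_mulVec, Matrix.one_mulVec]
  -- the scalar form βk
  set βk : (Fin n → k) → (Fin n → k) → k := fun u v => u ⬝ᵥ (M *ᵥ v) with hβk
  have hβsymm : ∀ u v, βk u v = βk v u := by
    intro u v
    rw [hβk]
    dsimp only
    rw [Matrix.dotProduct_mulVec, ← Matrix.mulVec_transpose, hMsymm, dotProduct_comm]
  have hadj : ∀ u v, βk (C *ᵥ u) v = βk u (C *ᵥ v) := by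
    intro u v
    show (C *ᵥ u) ⬝ᵥ (M *ᵥ v) = u ⬝ᵥ (M *ᵥ (C *ᵥ v))
    calc (C *ᵥ u) ⬝ᵥ (M *ᵥ v)
        = (u ᵥ* Cᵀ) ⬝ᵥ (M *ᵥ v) := by rw [Matrix.vecMul_transpose]
      _ = ((u ᵥ* Cᵀ) ᵥ* M) ⬝ᵥ v := Matrix.dotProduct_mulVec _ _ _
      _ = (u ᵥ* (M * C)) ⬝ᵥ v := by rw [Matrix.vecMul_vecMul, hCM]
      _ = u ⬝ᵥ ((M * C) *ᵥ v) := (Matrix.dotProduct_mulVec _ _ _).symm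
      _ = u ⬝ᵥ (M *ᵥ (C *ᵥ v)) := by rw [← Matrix.mulVec_mulVec]
  have hCC : ∀ u v, βk (C *ᵥ u) (C *ᵥ v) = α * βk u v := by
    intro u v
    rw [hadj, hβk]
    dsimp only
    rw [hCCv, Matrix.mulVec_smul, dotProduct_smul, smul_eq_mul]
  have hβadd₁ : ∀ u u' v, βk (u + u') v = βk u v + βk u' v := by
    intro u u' v; rw [hβk]; dsimp only; rw [add_dotProduct]
  have hβadd₂ : ∀ u v v', βk u (v + v') = βk u v + βk u v' := by
    intro u v v'; rw [hβk]; dsimp only; rw [Matrix.mulVec_add, dotProduct_add]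
  have hβsmul₁ : ∀ (a : k) u v, βk (a • u) v = a * βk u v := by
    intro a u v; rw [hβk]; dsimp only; rw [smul_dotProduct, smul_eq_mul]
  have hβsmul₂ : ∀ (a : k) u v, βk u (a • v) = a * βk u v := by
    intro a u v; rw [hβk]; dsimp only; rw [Matrix.mulVec_smul, dotProduct_smul, smul_eq_mul]
  -- the quadratic extension K
  set q : Polynomial k := Polynomial.X ^ 2 - Polynomial.C α with hqdef
  have hqdeg : q.natDegree = 2 := Polynomial.natDegree_X_pow_sub_C
  have hq0 : q ≠ 0 := fun h => by rw [h] at hqdeg; simp at hqdeg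
  have hqmonic : q.Monic := Polynomial.monic_X_pow_sub_C α two_ne_zero
  have hqirr : Irreducible q := by
    rw [Polynomial.irreducible_iff_roots_eq_zero_of_degree_le_three (by rw [hqdeg])
      (by rw [hqdeg]; omega)]
    rw [Multiset.eq_zero_iff_forall_notMem]
    intro r hr
    rw [Polynomial.mem_roots hq0] at hr
    have hr' := hr
    simp only [hqdef, Polynomial.IsRoot, Polynomial.eval_sub, Polynomial.eval_pow,
      Polynomial.eval_X, Polynomial.eval_C, sub_eq_zero] at hr'
    exact hns r hr'
  letI : Fact (Irreducible q) := ⟨hqirr⟩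
  set K := AdjoinRoot q with hK
  set t : K := AdjoinRoot.root q with ht
  set ι : k →+* K := algebraMap k K with hι
  have hinj : Function.Injective ι := ι.injective
  have ht2 : t ^ 2 = ι α := by
    have h := AdjoinRoot.eval₂_root q
    rw [hqdef] at h
    simp only [Polynomial.eval₂_sub, Polynomial.eval₂_pow, Polynomial.eval₂_X,
      Polynomial.eval₂_C, sub_eq_zero] at h
    exact h.symm ▸ rfl
  -- independence of 1, t over k
  have hKind : ∀ a b : k, ι a + ι b * t = 0 → a = 0 ∧ b = 0 := by
    intro a b hab
    by_cases hb : b = 0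
    · subst hb
      simp only [map_zero, zero_mul, add_zero] at hab
      exact ⟨hinj (by simpa using hab), rfl⟩
    · exfalso
      have hbne : ι b ≠ 0 := fun h => hb (hinj (by simpa using h))
      have htval : t = ι (-(a / b)) := by
        rw [map_neg, map_div₀, ← neg_div, eq_comm, div_eq_iff hbne]
        linear_combination -hab
      apply hns (-(a / b))
      have h2 : t ^ 2 = ι ((-(a / b)) ^ 2) := by rw [htval, map_pow]
      rw [ht2] at h2
      exact (hinj h2).symm
  -- decomposition of every element of K
  have hdec : ∀ c : K, ∃ a b : k, c = ι a + ι b * t := by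
    intro c
    obtain ⟨p, rfl⟩ := AdjoinRoot.mk_surjective c
    have hmod : AdjoinRoot.mk q p = AdjoinRoot.mk q (p %ₘ q) := by
      conv_lhs => rw [← Polynomial.modByMonic_add_div p q]
      simp [map_add, _root_.map_mul, AdjoinRoot.mk_self]
    set r := p %ₘ q with hr
    have hdeg : r.natDegree ≤ 1 := by
      by_cases hr0 : r = 0
      · simp [hr0]
      · have hlt := Polynomial.degree_modByMonic_lt p hqmonic
        rw [← hr] at hlt
        have h2 : q.degree = 2 := by
          rw [Polynomial.degree_eq_natDegree hq0, hqdeg]; rfl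
        rw [h2] at hlt
        have h3 : r.natDegree < 2 := by
          rw [Polynomial.natDegree_lt_iff_degree_lt hr0]; exact_mod_cast hlt
        omega
    refine ⟨r.coeff 0, r.coeff 1, ?_⟩
    rw [hmod]
    have hrepr := Polynomial.eq_X_add_C_of_natDegree_le_one hdeg
    rw [← AdjoinRoot.aeval_eq]
    conv_lhs => rw [hrepr]
    simp only [map_add, _root_.map_mul, Polynomial.aeval_X, Polynomial.aeval_C]
    rw [hι, AdjoinRoot.algebraMap_eq]
    ring
  -- the K-module structure on V
  set T : Module.End k (Fin n → k) := Matrix.mulVecLin C with hT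
  have hTq : Polynomial.aeval T q = 0 := by
    rw [hqdef]
    simp only [map_sub, map_pow, Polynomial.aeval_X, Polynomial.aeval_C]
    rw [Module.algebraMap_end_eq_smul_id, sub_eq_zero]
    refine LinearMap.ext fun v => ?_
    rw [pow_two, Module.End.mul_apply, hT, Matrix.mulVecLin_apply, Matrix.mulVecLin_apply, hCCv]
    rfl
  have hvanish : ∀ p ∈ Ideal.span {q}, (Polynomial.aeval T).toRingHom p = 0 := by
    intro p hp
    rw [Ideal.mem_span_singleton] at hp
    obtain ⟨c, rfl⟩ := hp
    simp only [AlgHom.toRingHom_eq_coe, RingHom.coe_coe, _root_.map_mul, hTq, zero_mul]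
  set ψ : K →+* Module.End k (Fin n → k) :=
    Ideal.Quotient.lift (Ideal.span {q}) (Polynomial.aeval T).toRingHom hvanish with hψ
  have hψmk : ∀ p : Polynomial k, ψ (AdjoinRoot.mk q p) = Polynomial.aeval T p := fun _ => rfl
  letI instKV : Module K (Fin n → k) := Module.compHom (Fin n → k) ψ
  have hsmul : ∀ (c : K) (v : Fin n → k), c • v = ψ c v := fun _ _ => rfl
  have hψalg : ∀ a : k, ψ (ι a) = algebraMap k (Module.End k (Fin n → k)) a := by
    intro a
    have h : ι a = AdjoinRoot.mk q (Polynomial.C a) := rfl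
    rw [h, hψmk, Polynomial.aeval_C]
  letI : IsScalarTower k K (Fin n → k) := ⟨fun a c v => by
    rw [hsmul, hsmul, Algebra.smul_def, _root_.map_mul, ← hι, hψalg,
      Module.End.mul_apply, Module.algebraMap_end_apply]⟩
  letI : FiniteDimensional K (Fin n → k) :=
    Module.Finite.of_restrictScalars_finite k K (Fin n → k)
  have hsmul_t : ∀ v : Fin n → k, t • v = C *ᵥ v := by
    intro v
    rw [hsmul, ht, AdjoinRoot.root, hψmk, Polynomial.aeval_X, hT, Matrix.mulVecLin_apply]
  have hsmul_k : ∀ (a : k) (v : Fin n → k), (ι a) • v = a • v := by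
    intro a v
    rw [hsmul, hψalg, Module.algebraMap_end_apply]
  -- dimension count
  set m := Module.finrank K (Fin n → k) with hm'
  have hfin : 2 * m = n := by
    have h1 : Module.finrank k K * Module.finrank K (Fin n → k) = Module.finrank k (Fin n → k) :=
      Module.finrank_mul_finrank k K (Fin n → k)
    have h2 : Module.finrank k K = 2 := by
      rw [(AdjoinRoot.powerBasis hq0).finrank, AdjoinRoot.powerBasis_dim, hqdeg]
    have h3 : Module.finrank k (Fin n → k) = n := (Module.finrank_pi k).trans (by simp)
    rw [h2, h3] at h1
    exact h1
  have hm : n = m + m := by omega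
  -- the K-bilinear form
  set f : (Fin n → k) → (Fin n → k) → K :=
    fun u v => ι (βk u v) + ι (α⁻¹ * βk u (C *ᵥ v)) * t with hf
  have hfC₂ : ∀ u v, f u (C *ᵥ v) = t * f u v := by
    intro u v
    rw [hf]
    dsimp only
    rw [hCCv, hβsmul₂]
    have h1 : α⁻¹ * (α * βk u v) = βk u v := by field_simp
    rw [h1]
    have h3 : t * (ι (α⁻¹ * βk u (C *ᵥ v)) * t) = ι (βk u (C *ᵥ v)) := by
      rw [mul_comm t, mul_assoc, ← pow_two, ht2, ← _root_.map_mul]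
      congr 1
      field_simp
    rw [mul_add, h3]
    ring
  have hfsymm : ∀ u v, f u v = f v u := by
    intro u v
    rw [hf]
    dsimp only
    rw [hβsymm, ← hadj u v, hβsymm (C *ᵥ u) v]
  have hfadd₂ : ∀ u v v', f u (v + v') = f u v + f u v' := by
    intro u v v'
    rw [hf]
    dsimp only
    rw [Matrix.mulVec_add, hβadd₂, hβadd₂]
    have e1 : α⁻¹ * (βk u (C *ᵥ v) + βk u (C *ᵥ v')) =
        α⁻¹ * βk u (C *ᵥ v) + α⁻¹ * βk u (C *ᵥ v') := by ring
    rw [e1, map_add, map_add, add_mul]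
    ring
  have hfsmulk₂ : ∀ (a : k) u v, f u (a • v) = ι a * f u v := by
    intro a u v
    rw [hf]
    dsimp only
    rw [Matrix.mulVec_smul, hβsmul₂, hβsmul₂, _root_.map_mul]
    have : α⁻¹ * (a * βk u (C *ᵥ v)) = a * (α⁻¹ * βk u (C *ᵥ v)) := by ring
    rw [this, _root_.map_mul]
    ring
  have hfsmul₂ : ∀ (c : K) u v, f u (c • v) = c * f u v := by
    intro c u v
    obtain ⟨a, b, rfl⟩ := hdec c
    have hcv : (ι a + ι b * t) • v = a • v + b • (C *ᵥ v) := by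
      rw [add_smul, mul_smul, hsmul_k, hsmul_t, hsmul_k]
    rw [hcv, hfadd₂, hfsmulk₂, hfsmulk₂, hfC₂]
    ring
  have hfsmul₁ : ∀ (c : K) u v, f (c • u) v = c * f u v := by
    intro c u v
    rw [hfsymm, hfsmul₂, hfsymm v u]
  have hfadd₁ : ∀ u u' v, f (u + u') v = f u v + f u' v := by
    intro u u' v
    rw [hfsymm, hfadd₂, hfsymm v u, hfsymm v u']
  -- the bilinear form
  set Bf : LinearMap.BilinForm K (Fin n → k) :=
    LinearMap.mk₂ K f hfadd₁ (fun c u v => (hfsmul₁ c u v).trans ((smul_eq_mul _ _).symm))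
      hfadd₂ (fun c u v => (hfsmul₂ c u v).trans ((smul_eq_mul _ _).symm)) with hBf
  have hBfapp : ∀ u v, Bf u v = f u v := fun _ _ => rfl
  have hBsymm : LinearMap.IsSymm Bf := LinearMap.isSymm_def.mpr <| by
    intro u v
    rw [RingHom.id_apply, hBfapp, hBfapp, hfsymm]
  have h2K : (2 : K) ≠ 0 := fun h => hchar (hinj (by rw [map_ofNat, map_zero, h]))
  letI : Invertible (2 : K) := invertibleOfNonzero h2K
  obtain ⟨b, hb⟩ := LinearMap.BilinForm.exists_orthogonal_basis hBsymm
  have horth : ∀ i j, i ≠ j → βk (b i) (b j) = 0 ∧ βk (b i) (C *ᵥ b j) = 0 := by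
    intro i j hij
    have h0 : f (b i) (b j) = 0 := hb hij
    rw [hf] at h0
    obtain ⟨h1, h2⟩ := hKind _ _ h0
    refine ⟨h1, ?_⟩
    rcases mul_eq_zero.mp h2 with h | h
    · exact absurd h (inv_ne_zero hα)
    · exact h
  -- assembling the k-basis
  set pb := AdjoinRoot.powerBasis hq0 with hpb
  have hdim : pb.dim = 2 := by rw [hpb, AdjoinRoot.powerBasis_dim, hqdeg]
  set bK : Module.Basis (Fin 2) k K := pb.basis.reindex (finCongr hdim) with hbKdef
  have hbK : ∀ i : Fin 2, bK i = t ^ (i : ℕ) := by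
    intro i
    rw [hbKdef, Module.Basis.reindex_apply, PowerBasis.basis_eq_pow]
    simp [hpb, AdjoinRoot.powerBasis_gen, ht]
  set esum : (Fin 2 × Fin m) ≃ (Fin m ⊕ Fin m) :=
    (finTwoEquiv.prodCongr (Equiv.refl (Fin m))).trans (Equiv.boolProdEquivSum (Fin m)) with hesum
  set bsum : Module.Basis (Fin m ⊕ Fin m) k (Fin n → k) := (bK.smulTower b).reindex esum with hbsum
  have hbsum_inl : ∀ j, bsum (Sum.inl j) = b j := by
    intro j
    rw [hbsum, Module.Basis.reindex_apply]
    have h : esum.symm (Sum.inl j) = ((0 : Fin 2), j) := rfl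
    rw [h, Module.Basis.smulTower_apply, hbK]
    norm_num
  have hbsum_inr : ∀ j, bsum (Sum.inr j) = C *ᵥ (b j) := by
    intro j
    rw [hbsum, Module.Basis.reindex_apply]
    have h : esum.symm (Sum.inr j) = ((1 : Fin 2), j) := rfl
    rw [h, Module.Basis.smulTower_apply, hbK]
    norm_num
    exact hsmul_t (b j)
  set w : (Fin m ⊕ Fin m) → kˣ :=
    Sum.elim (fun _ => 1) (fun _ => (Units.mk0 α hα)⁻¹) with hw
  set bk : Module.Basis (Fin m ⊕ Fin m) k (Fin n → k) := bsum.unitsSMul w with hbkdef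
  have hbk_inl : ∀ j, bk (Sum.inl j) = b j := by
    intro j
    rw [hbkdef, Module.Basis.unitsSMul_apply, hbsum_inl]
    simp [hw]
  have hbk_inr : ∀ j, bk (Sum.inr j) = α⁻¹ • (C *ᵥ b j) := by
    intro j
    rw [hbkdef, Module.Basis.unitsSMul_apply, hbsum_inr]
    simp [hw, Units.smul_def]
  set e : (Fin m ⊕ Fin m) ≃ Fin n := finSumFinEquiv.trans (finCongr hm.symm) with he
  set bn : Module.Basis (Fin n) k (Fin n → k) := bk.reindex e with hbn
  set Y : Matrix (Fin n) (Fin m ⊕ Fin m) k := Matrix.of fun i p => bk p i with hY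
  set X : Matrix (Fin n) (Fin n) k := Y.submatrix id ⇑e.symm with hX
  have hXtoM : X = (Pi.basisFun k (Fin n)).toMatrix ⇑bn := by
    ext i j
    rw [Module.Basis.toMatrix_apply, Pi.basisFun_repr, hbn, Module.Basis.reindex_apply]
    rfl
  have hXunit : IsUnit X := by
    rw [hXtoM]
    letI := (Pi.basisFun k (Fin n)).invertibleToMatrix bn
    exact isUnit_of_invertible _
  have hXinv : X * X⁻¹ = 1 := Matrix.mul_nonsing_inv X ((Matrix.isUnit_iff_isUnit_det X).mp hXunit)
  set FB : Matrix (Fin m ⊕ Fin m) (Fin m ⊕ Fin m) k :=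
    Matrix.fromBlocks 0 1 (α • 1) 0 with hFB
  have hCY : C * Y = Y * FB := by
    ext i p
    rcases p with j | j
    · rw [Matrix.mul_apply, Matrix.mul_apply, Fintype.sum_sum_type]
      simp only [hY, hFB, Matrix.of_apply, hbk_inl, hbk_inr, Matrix.fromBlocks_apply₁₁,
        Matrix.fromBlocks_apply₂₁, Matrix.zero_apply, Matrix.smul_apply, Matrix.one_apply,
        mul_zero, Finset.sum_const_zero, zero_add, smul_eq_mul, mul_ite, mul_one,
        Pi.smul_apply, Finset.sum_ite_eq', Finset.mem_univ, if_true]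
      have h1 : α⁻¹ * (C *ᵥ b j) i * α = (C *ᵥ b j) i := by
        field_simp
      rw [h1]
      rfl
    · rw [Matrix.mul_apply, Matrix.mul_apply, Fintype.sum_sum_type]
      simp only [hY, hFB, Matrix.of_apply, hbk_inl, hbk_inr, Matrix.fromBlocks_apply₁₂,
        Matrix.fromBlocks_apply₂₂, Matrix.zero_apply, Matrix.one_apply,
        mul_zero, Finset.sum_const_zero, add_zero, mul_ite, mul_one,
        Pi.smul_apply, smul_eq_mul, Finset.sum_ite_eq', Finset.mem_univ, if_true]
      have hCw : ∀ l, C i l * (α⁻¹ * (C *ᵥ b j) l) = α⁻¹ * (C i l * (C *ᵥ b j) l) := by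
        intro l; ring
      calc (∑ l, C i l * (α⁻¹ * (C *ᵥ b j) l))
          = α⁻¹ * ∑ l, C i l * (C *ᵥ b j) l := by
            rw [Finset.mul_sum]; exact Finset.sum_congr rfl fun l _ => hCw l
        _ = α⁻¹ * (C *ᵥ (C *ᵥ b j)) i := rfl
        _ = b j i := by
            rw [hCCv, Pi.smul_apply, smul_eq_mul, ← mul_assoc, inv_mul_cancel₀ hα, one_mul]
  have hCX : C * X = (C * Y).submatrix id ⇑e.symm := by
    ext i j
    simp [hX, Matrix.mul_apply]
  have hXN : X * (FB.submatrix ⇑e.symm ⇑e.symm) = (Y * FB).submatrix id ⇑e.symm := by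
    rw [hX]
    exact Matrix.submatrix_mul_equiv Y FB id e.symm ⇑e.symm
  have hCeq : C = X * (Matrix.reindex e e FB) * X⁻¹ := by
    have h1 : X * (Matrix.reindex e e FB) = C * X := by
      rw [Matrix.reindex_apply, hXN, ← hCY, ← hCX]
    rw [h1, Matrix.mul_assoc, hXinv, Matrix.mul_one]
  -- the Gram matrix
  set X₁ : Matrix (Fin m) (Fin m) k := Matrix.diagonal (fun i => βk (b i) (b i)) with hX₁
  set X₂ : Matrix (Fin m) (Fin m) k :=
    Matrix.diagonal (fun i => α⁻¹ * βk (b i) (C *ᵥ b i)) with hX₂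
  have hYMY : ∀ p r, (Yᵀ * M * Y) p r = βk (bk p) (bk r) := by
    intro p r
    rw [Matrix.mul_assoc, Matrix.mul_apply]
    simp only [hY, hβk, Matrix.transpose_apply, Matrix.of_apply, Matrix.mul_apply,
      Matrix.mulVec, dotProduct, Finset.mul_sum]
  have hXMX : Xᵀ * M * X = (Yᵀ * M * Y).submatrix ⇑e.symm ⇑e.symm := by
    ext i j
    rw [Matrix.mul_assoc, Matrix.mul_assoc]
    simp [hX, Matrix.mul_apply, Matrix.transpose_apply, Finset.mul_sum]
  have hblocks : Yᵀ * M * Y = Matrix.fromBlocks X₁ X₂ X₂ (α⁻¹ • X₁) := by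
    ext p r
    rw [hYMY]
    rcases p with i | i <;> rcases r with j | j
    · rw [hbk_inl, hbk_inl, Matrix.fromBlocks_apply₁₁, hX₁]
      by_cases hij : i = j
      · subst hij; rw [Matrix.diagonal_apply_eq]
      · rw [Matrix.diagonal_apply_ne _ hij]
        exact (horth i j hij).1
    · rw [hbk_inl, hbk_inr, Matrix.fromBlocks_apply₁₂, hX₂, hβsmul₂]
      by_cases hij : i = j
      · subst hij; rw [Matrix.diagonal_apply_eq]
      · rw [Matrix.diagonal_apply_ne _ hij, (horth i j hij).2, mul_zero]
    · rw [hbk_inr, hbk_inl, Matrix.fromBlocks_apply₂₁, hX₂, hβsmul₁, hadj]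
      by_cases hij : i = j
      · subst hij; rw [Matrix.diagonal_apply_eq]
      · rw [Matrix.diagonal_apply_ne _ hij, (horth i j hij).2, mul_zero]
    · rw [hbk_inr, hbk_inr, Matrix.fromBlocks_apply₂₂, hβsmul₁, hβsmul₂, hCC,
        Matrix.smul_apply, hX₁, smul_eq_mul]
      by_cases hij : i = j
      · subst hij
        rw [Matrix.diagonal_apply_eq]
        field_simp
      · rw [Matrix.diagonal_apply_ne _ hij, (horth i j hij).1]
        ring
  refine ⟨m, hm, X, hXunit, ?_, X₁, X₂, Matrix.isDiag_diagonal _, Matrix.isDiag_diagonal _, ?_⟩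
  · rw [← he, ← hFB]
    exact hCeq
  · rw [hXMX, hblocks, Matrix.reindex_apply]



set_option maxHeartbeats 1000000 in
/-- Structure of Type 2 involutions: if `A = s·ι(A₀)` with `s² = α ∈ k`, `s ∉ k`,
`AᵀM̄A = M̄` and `A² = I`, then `n` is even and
`A = (-s/α)·ι(X · [[0, I],[αI, 0]] · X⁻¹)` with
`XᵀMX = [[X₁, X₂],[X₂, α⁻¹X₁]]`, `X₁, X₂` diagonal. -/
theorem type2_structure {k L : Type*} [Field k] [Field L] [Algebra k L]
    (hchar : (2 : k) ≠ 0) {n : ℕ} (hn : 2 < n)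
    (M : Matrix (Fin n) (Fin n) k) (hMdiag : M.IsDiag) (hM : IsUnit M)
    (hfriendly : ∀ s t : Fin n, ∃ x y : k, y ≠ 0 ∧ x ^ 2 + (M s s / M t t) * y ^ 2 = 1)
    (α : k) (hα : α ≠ 0) (s : L) (hs : s ^ 2 = algebraMap k L α)
    (hind : LinearIndependent k ![(1 : L), s])
    (A₀ : Matrix (Fin n) (Fin n) k) (A : Matrix (Fin n) (Fin n) L)
    (hAdef : A = s • A₀.map (algebraMap k L))
    (hAorth : Aᵀ * M.map (algebraMap k L) * A = M.map (algebraMap k L))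
    (hA2 : A * A = 1) :
    ∃ (m : ℕ) (hm : n = m + m) (X : Matrix (Fin n) (Fin n) k), IsUnit X ∧
      A = (-(s * (algebraMap k L α)⁻¹)) •
        (X * (Matrix.reindex (finSumFinEquiv.trans (finCongr hm.symm))
            (finSumFinEquiv.trans (finCongr hm.symm))
            (Matrix.fromBlocks 0 1 (α • (1 : Matrix (Fin m) (Fin m) k)) 0)) *
          X⁻¹).map (algebraMap k L) ∧
      ∃ X₁ X₂ : Matrix (Fin m) (Fin m) k, X₁.IsDiag ∧ X₂.IsDiag ∧
        Xᵀ * M * X = Matrix.reindex (finSumFinEquiv.trans (finCongr hm.symm))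
          (finSumFinEquiv.trans (finCongr hm.symm))
          (Matrix.fromBlocks X₁ X₂ X₂ (α⁻¹ • X₁)) := by
  classical
  set ι : k →+* L := algebraMap k L with hιdef
  have hinj : Function.Injective ι := ι.injective
  have hια : ι α ≠ 0 := fun h => hα (hinj (by rw [h, map_zero]))
  have hsmulmap : ∀ (c : k) (B : Matrix (Fin n) (Fin n) k),
      (c • B).map ι = (ι c) • B.map ι := by
    intro c B
    ext i j
    simp [Matrix.map_apply, smul_eq_mul, _root_.map_mul]
  -- scalar equations over k
  have hA2k : α • (A₀ * A₀) = 1 := by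
    apply Matrix.map_injective hinj
    show (α • (A₀ * A₀)).map ι = (1 : Matrix (Fin n) (Fin n) k).map ι
    have h1 : A * A = (α • (A₀ * A₀)).map ι := by
      rw [hAdef, Matrix.smul_mul, Matrix.mul_smul, smul_smul, ← sq, hs, ← Matrix.map_mul,
        ← hsmulmap]
    rw [← h1, hA2, Matrix.map_one ι (map_zero ι) (map_one ι)]
  have hAorthk : α • (A₀ᵀ * M * A₀) = M := by
    apply Matrix.map_injective hinj
    show (α • (A₀ᵀ * M * A₀)).map ι = M.map ι
    have h1 : Aᵀ * M.map ι * A = (α • (A₀ᵀ * M * A₀)).map ι := by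
      rw [hAdef, Matrix.transpose_smul, ← Matrix.transpose_map, Matrix.smul_mul, Matrix.smul_mul,
        Matrix.mul_smul, smul_smul, ← sq, hs, ← Matrix.map_mul, ← Matrix.map_mul, ← hsmulmap]
    rw [← h1, hAorth]
  -- α is not a square
  have hns : ∀ c : k, c ^ 2 ≠ α := by
    intro c hc
    have hind' : ∀ a : k, a • (1 : L) ≠ s := (LinearIndependent.pair_iff' one_ne_zero).mp hind
    have hsc : (s - ι c) * (s + ι c) = 0 := by
      have h2 : s ^ 2 = (ι c) ^ 2 := by rw [hs, ← hc, map_pow]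
      linear_combination h2
    rcases mul_eq_zero.mp hsc with h | h
    · exact hind' c (by rw [Algebra.smul_def, mul_one, ← sub_eq_zero]; linear_combination -h)
    · refine hind' (-c) ?_
      rw [Algebra.smul_def, mul_one, map_neg, ← sub_eq_zero]
      linear_combination -h
  -- the matrix C
  set C : Matrix (Fin n) (Fin n) k := (-α) • A₀ with hCdef
  have hC2 : C * C = α • 1 := by
    rw [hCdef, Matrix.smul_mul, Matrix.mul_smul, smul_smul, neg_mul_neg, ← smul_smul, hA2k]
  have hCMC : Cᵀ * M * C = α • M := by
    rw [hCdef, Matrix.transpose_smul, Matrix.smul_mul, Matrix.smul_mul, Matrix.mul_smul,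
      smul_smul, neg_mul_neg, ← smul_smul, hAorthk]
  have hCM : Cᵀ * M = M * C := by
    apply smul_right_injective (Matrix (Fin n) (Fin n) k) hα
    calc α • (Cᵀ * M) = Cᵀ * M * (α • 1) := by rw [Matrix.mul_smul, Matrix.mul_one]
      _ = Cᵀ * M * (C * C) := by rw [hC2]
      _ = (Cᵀ * M * C) * C := by simp only [Matrix.mul_assoc]
      _ = (α • M) * C := by rw [hCMC]
      _ = α • (M * C) := Matrix.smul_mul _ _ _
  obtain ⟨m, hm, X, hXunit, hCeq, X₁, X₂, h1, h2, h3⟩ :=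
    key_structure hchar M hMdiag α hα hns C hC2 hCM
  refine ⟨m, hm, X, hXunit, ?_, X₁, X₂, h1, h2, h3⟩
  rw [← hCeq, hCdef, hsmulmap, smul_smul, hAdef]
  congr 1
  rw [map_neg]
  field_simp
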